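/- Let F : ℝ^d → ℝ be convex and differentiable, satisfy F(v) ≤ 0 whenever all coordinates of v are ≤ 0, be 'positive invariant and L-smooth': F((x+y)⁺) ≤ F(x) + ⟨∇F(x), y⟩ + (L/2)‖y‖² for all x, y. Let (s_t) and (m_t) be sequences in ℝ^d, define S⁺_t = (S⁺_{t-1} + s_t)⁺ with S⁺_0 = 0, let 0 < η_t ≤ η_{t-1} be decreasing positive step sizes, and assume ⟨∇F(η_t(S⁺_{t-1} + m_t)), s_t⟩ ≤ 0 for all t. Then F(η_T · S⁺_T) ≤ (L/2) ∑_{t=1}^T η_T η_t ‖s_t − m_t‖². -/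

import Mathlib

open RealInnerProductSpace

open InnerProductSpace in
lemma grad_convex_le {d : ℕ} {F : EuclideanSpace ℝ (Fin d) → ℝ}
    (hconv : ConvexOn ℝ Set.univ F) {x gx : EuclideanSpace ℝ (Fin d)}
    (hx : HasGradientAt F gx x) (z : EuclideanSpace ℝ (Fin d)) :
    F x + ⟪gx, z - x⟫ ≤ F z := by
  set v := z - x with hv
  have hcurve : HasDerivAt (fun t : ℝ => x + t • v) v 0 := by
    simpa using ((hasDerivAt_id (0 : ℝ)).smul_const v).const_add x
  have hfd : HasFDerivAt F (toDual ℝ _ gx) (x + (0 : ℝ) • v) := by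
    simpa using hx.hasFDerivAt
  have hD : HasDerivAt (fun t : ℝ => F (x + t • v)) ⟪gx, v⟫ 0 := by
    have h := hfd.comp_hasDerivAt 0 hcurve
    simp at h
    exact h
  have hhconv : ConvexOn ℝ Set.univ (fun t : ℝ => F (x + t • v)) := by
    refine ⟨convex_univ, fun a _ b _ p q hp hq hpq => ?_⟩
    have hpt : x + (p * a + q * b) • v = p • (x + a • v) + q • (x + b • v) := by
      calc x + (p * a + q * b) • v = (p + q) • x + (p * a + q * b) • v := by
            rw [hpq, one_smul]
        _ = p • (x + a • v) + q • (x + b • v) := by module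
    show F (x + (p * a + q * b) • v) ≤ p • F (x + a • v) + q • F (x + b • v)
    rw [smul_eq_mul, smul_eq_mul, hpt]
    exact hconv.2 (Set.mem_univ _) (Set.mem_univ _) hp hq hpq
  have hslope := hhconv.le_slope_of_hasDerivAt (Set.mem_univ (0 : ℝ))
    (Set.mem_univ (1 : ℝ)) one_pos hD
  have h1 : x + (1 : ℝ) • v = z := by rw [one_smul, hv]; abel
  have h0 : x + (0 : ℝ) • v = x := by rw [zero_smul, add_zero]
  rw [slope_def_field, h1, h0] at hslope
  simp only [sub_zero, div_one] at hslope
  linarith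

/-- Theorem 4: optimistic Lagrangian hedging+ potential bound with the
recursively clipped regret vector. -/
theorem stmt_13 {d : ℕ} (T : ℕ) (hT : 1 ≤ T)
    (F : EuclideanSpace ℝ (Fin d) → ℝ)
    (g : EuclideanSpace ℝ (Fin d) → EuclideanSpace ℝ (Fin d))
    (hdiff : ∀ x, HasGradientAt F (g x) x)
    (hconv : ConvexOn ℝ Set.univ F)
    (hFneg : ∀ v : EuclideanSpace ℝ (Fin d), (∀ i, v i ≤ 0) → F v ≤ 0)
    (L : ℝ)
    (hsmooth : ∀ x y : EuclideanSpace ℝ (Fin d),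
      F (WithLp.toLp 2 (fun i => max (x i + y i) 0)) ≤ F x + ⟪g x, y⟫ + L / 2 * ‖y‖ ^ 2)
    (s m : ℕ → EuclideanSpace ℝ (Fin d))
    (Splus : ℕ → EuclideanSpace ℝ (Fin d))
    (hS0 : Splus 0 = 0)
    (hSrec : ∀ t, 1 ≤ t → Splus t = WithLp.toLp 2 (fun i => max ((Splus (t - 1) + s t) i) 0))
    (η : ℕ → ℝ) (hηpos : ∀ t, 0 < η t) (hηdec : ∀ t, 1 ≤ t → η t ≤ η (t - 1))
    (hblackwell : ∀ t ∈ Finset.Icc 1 T,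
      ⟪g (η t • (Splus (t - 1) + m t)), s t⟫ ≤ 0) :
    F (η T • Splus T) ≤ L / 2 * ∑ t ∈ Finset.Icc 1 T, η T * η t * ‖s t - m t‖ ^ 2 := by
  have hF0 : F 0 ≤ 0 := hFneg 0 (fun i => le_of_eq rfl)
  have key : ∀ t : ℕ, t ≤ T →
      F (η t • Splus t) ≤ L / 2 * ∑ τ ∈ Finset.Icc 1 t, η t * η τ * ‖s τ - m τ‖ ^ 2 := by
    intro t
    induction t with
    | zero =>
      intro _
      have he : (Finset.Icc 1 0 : Finset ℕ) = ∅ := by decide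
      rw [hS0, smul_zero, he, Finset.sum_empty, mul_zero]
      exact hF0
    | succ t ih =>
      intro hle
      have ht1 : (1 : ℕ) ≤ t + 1 := Nat.succ_le_succ (Nat.zero_le t)
      have ih' := ih (le_trans (Nat.le_succ t) hle)
      set x := η (t + 1) • (Splus t + m (t + 1)) with hxdef
      set y := η (t + 1) • (s (t + 1) - m (t + 1)) with hydef
      have hclip : (η (t + 1) • Splus (t + 1)) = WithLp.toLp 2 (fun i => max (x i + y i) 0) := by
        ext i
        simp only [PiLp.toLp_apply]
        have hs := hSrec (t + 1) ht1
        simp only [Nat.add_sub_cancel] at hs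
        rw [hs]
        have hxy : x i + y i = η (t + 1) * ((Splus t + s (t + 1)) i) := by
          simp only [hxdef, hydef, PiLp.smul_apply, PiLp.add_apply, PiLp.sub_apply,
            smul_eq_mul]
          ring
        rw [hxy]
        simp only [PiLp.smul_apply, PiLp.toLp_apply, smul_eq_mul]
        rw [mul_max_of_nonneg _ _ (hηpos (t + 1)).le, mul_zero]
      have hsm := hsmooth x y
      rw [← hclip] at hsm
      have hb : ⟪g x, s (t + 1)⟫ ≤ 0 := by
        have := hblackwell (t + 1) (Finset.mem_Icc.mpr ⟨ht1, hle⟩)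
        simpa only [Nat.add_sub_cancel] using this
      have hcv := grad_convex_le hconv (hdiff x) (η (t + 1) • Splus t)
      have hzx : (η (t + 1) • Splus t) - x = -(η (t + 1) • m (t + 1)) := by
        rw [hxdef, smul_add]; abel
      rw [hzx] at hcv
      have hy_inner : ⟪g x, y⟫ =
          η (t + 1) * ⟪g x, s (t + 1)⟫ + ⟪g x, -(η (t + 1) • m (t + 1))⟫ := by
        rw [hydef]
        rw [inner_neg_right, inner_smul_right, inner_smul_right, inner_sub_right]
        ring
      have hynorm : ‖y‖ ^ 2 = η (t + 1) ^ 2 * ‖s (t + 1) - m (t + 1)‖ ^ 2 := by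
        rw [hydef, norm_smul, Real.norm_eq_abs, abs_of_pos (hηpos _), mul_pow]
      have hA : η (t + 1) * ⟪g x, s (t + 1)⟫ ≤ 0 :=
        mul_nonpos_of_nonneg_of_nonpos (hηpos _).le hb
      have step1 : F (η (t + 1) • Splus (t + 1)) ≤
          F (η (t + 1) • Splus t) + L / 2 * (η (t + 1) ^ 2 * ‖s (t + 1) - m (t + 1)‖ ^ 2) := by
        rw [hy_inner, hynorm] at hsm
        linarith
      -- scaling step
      set lam := η (t + 1) / η t with hlamdef
      have hlampos : 0 < lam := div_pos (hηpos _) (hηpos _)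
      have hdec : η (t + 1) ≤ η t := by
        have := hηdec (t + 1) ht1
        simpa only [Nat.add_sub_cancel] using this
      have hlamle : lam ≤ 1 := (div_le_one (hηpos t)).mpr hdec
      have hlameta : lam * η t = η (t + 1) := div_mul_cancel₀ _ (hηpos t).ne'
      have hcomb := hconv.2 (Set.mem_univ (η t • Splus t))
        (Set.mem_univ (0 : EuclideanSpace ℝ (Fin d))) hlampos.le
        (by linarith : (0:ℝ) ≤ 1 - lam) (by ring)
      rw [smul_zero, add_zero, smul_smul, hlameta, smul_eq_mul, smul_eq_mul] at hcomb
      have hstep2 : F (η (t + 1) • Splus t) ≤ lam * F (η t • Splus t) := by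
        have : (1 - lam) * F 0 ≤ 0 :=
          mul_nonpos_of_nonneg_of_nonpos (by linarith) hF0
        linarith
      have hmul : lam * F (η t • Splus t) ≤
          lam * (L / 2 * ∑ τ ∈ Finset.Icc 1 t, η t * η τ * ‖s τ - m τ‖ ^ 2) :=
        mul_le_mul_of_nonneg_left ih' hlampos.le
      have hsum : lam * (L / 2 * ∑ τ ∈ Finset.Icc 1 t, η t * η τ * ‖s τ - m τ‖ ^ 2) =
          L / 2 * ∑ τ ∈ Finset.Icc 1 t, η (t + 1) * η τ * ‖s τ - m τ‖ ^ 2 := by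
        simp only [Finset.mul_sum]
        refine Finset.sum_congr rfl fun τ _ => ?_
        rw [← hlameta]; ring
      have hsplit : ∑ τ ∈ Finset.Icc 1 (t + 1), η (t + 1) * η τ * ‖s τ - m τ‖ ^ 2 =
          (∑ τ ∈ Finset.Icc 1 t, η (t + 1) * η τ * ‖s τ - m τ‖ ^ 2) +
            η (t + 1) * η (t + 1) * ‖s (t + 1) - m (t + 1)‖ ^ 2 :=
        Finset.sum_Icc_succ_top ht1 _
      rw [hsplit, mul_add]
      have : η (t + 1) ^ 2 = η (t + 1) * η (t + 1) := sq (η (t+1)) ▸ rfl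
      nlinarith [step1, hstep2, hmul, hsum]
  exact key T le_rfl
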